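/- arXiv:1507.02900 — 2 statements merged into one kernel-verified Lean document; each statement's English description precedes it below -/
import Mathlib

section
/- Let P be a map from nonnegative finite measures on ℝ^d (with mass at most |Ω|) to densities on Ω bounded by 1, satisfying: (a) monotonicity: if ρ ≤ η (as measures) then P(ρ) ≤ P(η) a.e.; (b) mass preservation: ∫ P(ρ) dx equals the total mass of ρ. Then for any two probability densities ρ₁, ρ₂, one has ‖P(ρ₁) − P(ρ₂)‖_{L¹} ≤ ‖ρ₁ − ρ₂‖_{L¹}. -/
open MeasureTheory

/-- Any monotone, mass-preserving projection `P` from nonnegative measures of mass at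
most `|Ω|` to densities on `Ω` bounded by `1` is an `L¹`-contraction on probability
densities. -/
theorem projection_L1_contraction {d : ℕ}
    (Ω : Set (EuclideanSpace ℝ (Fin d))) (hΩm : MeasurableSet Ω)
    (hΩvol : 1 < volume Ω)
    (P : Measure (EuclideanSpace ℝ (Fin d)) → EuclideanSpace ℝ (Fin d) → ℝ)
    (hPmeas : ∀ μ, Measurable (P μ))
    (hPbound : ∀ μ, ∀ x, 0 ≤ P μ x ∧ P μ x ≤ 1)
    (hPsupp : ∀ μ, ∀ x ∉ Ω, P μ x = 0)
    (hPmono : ∀ μ ν : Measure (EuclideanSpace ℝ (Fin d)),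
      μ ≤ ν → ν Set.univ ≤ volume Ω → ∀ᵐ x, P μ x ≤ P ν x)
    (hPmass : ∀ μ : Measure (EuclideanSpace ℝ (Fin d)),
      μ Set.univ ≤ volume Ω → ∫ x, P μ x = (μ Set.univ).toReal)
    (ρ₁ ρ₂ : EuclideanSpace ℝ (Fin d) → ℝ)
    (h₁m : Measurable ρ₁) (h₂m : Measurable ρ₂)
    (h₁pos : ∀ x, 0 ≤ ρ₁ x) (h₂pos : ∀ x, 0 ≤ ρ₂ x)
    (h₁int : Integrable ρ₁) (h₂int : Integrable ρ₂)
    (h₁mass : ∫ x, ρ₁ x = 1) (h₂mass : ∫ x, ρ₂ x = 1) :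
    ∫ x, |P (volume.withDensity (fun x => ENNReal.ofReal (ρ₁ x))) x
          - P (volume.withDensity (fun x => ENNReal.ofReal (ρ₂ x))) x|
      ≤ ∫ x, |ρ₁ x - ρ₂ x| := by
  set μ₁ := volume.withDensity (fun x => ENNReal.ofReal (ρ₁ x)) with hμ₁def
  set μ₂ := volume.withDensity (fun x => ENNReal.ofReal (ρ₂ x)) with hμ₂def
  set ρ : EuclideanSpace ℝ (Fin d) → ℝ := fun x => min (ρ₁ x) (ρ₂ x) with hρdef
  set μ := volume.withDensity (fun x => ENNReal.ofReal (ρ x)) with hμdef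
  have hρm : Measurable ρ := h₁m.min h₂m
  have hρpos' : ∀ x, 0 ≤ ρ x := fun x => le_min (h₁pos x) (h₂pos x)
  have hρpos : ∀ x, 0 ≤ ρ x := hρpos'
  have hρint : Integrable ρ := by
    refine h₁int.mono (hρm.aestronglyMeasurable) (Filter.Eventually.of_forall fun x => ?_)
    rw [Real.norm_eq_abs, Real.norm_eq_abs, abs_of_nonneg (hρpos' x), abs_of_nonneg (h₁pos x)]
    exact min_le_left _ _
  -- masses
  have hmass1 : μ₁ Set.univ = 1 := by
    rw [hμ₁def, withDensity_apply _ MeasurableSet.univ, setLIntegral_univ,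
      ← ofReal_integral_eq_lintegral_ofReal h₁int (Filter.Eventually.of_forall h₁pos),
      h₁mass, ENNReal.ofReal_one]
  have hmass2 : μ₂ Set.univ = 1 := by
    rw [hμ₂def, withDensity_apply _ MeasurableSet.univ, setLIntegral_univ,
      ← ofReal_integral_eq_lintegral_ofReal h₂int (Filter.Eventually.of_forall h₂pos),
      h₂mass, ENNReal.ofReal_one]
  have hmassρ : μ Set.univ = ENNReal.ofReal (∫ x, ρ x) := by
    rw [hμdef, withDensity_apply _ MeasurableSet.univ, setLIntegral_univ,
      ← ofReal_integral_eq_lintegral_ofReal hρint (Filter.Eventually.of_forall hρpos)]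
  have hle1 : μ₁ Set.univ ≤ volume Ω := by rw [hmass1]; exact hΩvol.le
  have hle2 : μ₂ Set.univ ≤ volume Ω := by rw [hmass2]; exact hΩvol.le
  -- monotonicity of withDensity
  have hμle1 : μ ≤ μ₁ :=
    withDensity_mono (Filter.Eventually.of_forall fun x =>
      ENNReal.ofReal_le_ofReal (min_le_left _ _))
  have hμle2 : μ ≤ μ₂ :=
    withDensity_mono (Filter.Eventually.of_forall fun x =>
      ENNReal.ofReal_le_ofReal (min_le_right _ _))
  have hP1 : ∀ᵐ x, P μ x ≤ P μ₁ x := hPmono μ μ₁ hμle1 hle1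
  have hP2 : ∀ᵐ x, P μ x ≤ P μ₂ x := hPmono μ μ₂ hμle2 hle2
  -- values of the mass preservation
  have hI1 : ∫ x, P μ₁ x = 1 := by rw [hPmass μ₁ hle1, hmass1, ENNReal.toReal_one]
  have hI2 : ∫ x, P μ₂ x = 1 := by rw [hPmass μ₂ hle2, hmass2, ENNReal.toReal_one]
  have hμleΩ : μ Set.univ ≤ volume Ω :=
    le_trans (le_trans (hμle1 Set.univ) hmass1.le) hΩvol.le
  have hρintnn : 0 ≤ ∫ x, ρ x := integral_nonneg hρpos
  have hIρ : ∫ x, P μ x = ∫ x, ρ x := by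
    rw [hPmass μ hμleΩ, hmassρ, ENNReal.toReal_ofReal hρintnn]
  -- integrability of the P's
  have hint1 : Integrable (P μ₁) := by
    by_contra h
    rw [integral_undef h] at hI1
    norm_num at hI1
  have hint2 : Integrable (P μ₂) := by
    by_contra h
    rw [integral_undef h] at hI2
    norm_num at hI2
  have hintρ : Integrable (P μ) := by
    refine hint1.mono (hPmeas μ).aestronglyMeasurable ?_
    filter_upwards [hP1] with x hx
    rw [Real.norm_eq_abs, Real.norm_eq_abs, abs_of_nonneg (hPbound μ x).1,
      abs_of_nonneg (hPbound μ₁ x).1]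
    exact hx
  -- main estimate
  have key : ∫ x, |P μ₁ x - P μ₂ x| ≤ ∫ x, (P μ₁ x + P μ₂ x - 2 * P μ x) := by
    refine integral_mono_ae ((hint1.sub hint2).abs) ((hint1.add hint2).sub (hintρ.const_mul 2)) ?_
    filter_upwards [hP1, hP2] with x hx1 hx2
    rw [abs_le]
    constructor <;> nlinarith [(hPbound μ x).1]
  have hsplit : ∫ x, (P μ₁ x + P μ₂ x - 2 * P μ x)
      = (∫ x, P μ₁ x) + (∫ x, P μ₂ x) - 2 * ∫ x, P μ x := by
    have hadd : Integrable (fun x => P μ₁ x + P μ₂ x) := hint1.add hint2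
    have h2 : Integrable (fun x => 2 * P μ x) := hintρ.const_mul 2
    rw [integral_sub hadd h2, integral_add hint1 hint2, integral_const_mul]
  have hRHS : ∫ x, |ρ₁ x - ρ₂ x| = (∫ x, ρ₁ x) + (∫ x, ρ₂ x) - 2 * ∫ x, ρ x := by
    have hadd : Integrable (fun x => ρ₁ x + ρ₂ x) := h₁int.add h₂int
    have h2 : Integrable (fun x => 2 * ρ x) := hρint.const_mul 2
    rw [← integral_add h₁int h₂int, ← integral_const_mul, ← integral_sub hadd h2]
    refine integral_congr_ae (Filter.Eventually.of_forall fun x => ?_)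
    rcases le_total (ρ₁ x) (ρ₂ x) with h | h <;>
      simp only [hρdef, min_eq_left, min_eq_right, h, abs_of_nonpos, abs_of_nonneg,
        sub_nonneg, sub_nonpos] <;> ring_nf <;>
      rw [abs_of_nonpos (by linarith), min_eq_left h] <;> ring
  calc ∫ x, |P μ₁ x - P μ₂ x| ≤ (∫ x, P μ₁ x) + (∫ x, P μ₂ x) - 2 * ∫ x, P μ x := by
        rw [← hsplit]; exact key
    _ = (∫ x, ρ₁ x) + (∫ x, ρ₂ x) - 2 * ∫ x, ρ x := by rw [hI1, hI2, hIρ, h₁mass, h₂mass]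
    _ = ∫ x, |ρ₁ x - ρ₂ x| := hRHS.symm
end

section
/- Let Ω ⊂ ℝ^d be a bounded convex open set, and let ρ₀, ρ₁ be absolutely continuous probability measures on Ω with densities ≤ 1 a.e. Let T be the optimal transport map from ρ₀ to ρ₁ for the quadratic cost, and define the geodesic interpolation ρ_t = ((1−t)id + tT)_♯ ρ₀ for t ∈ [0,1]. Then for every t ∈ [0,1], ρ_t is absolutely continuous with density ≤ 1 a.e. -/
open MeasureTheory Set Filter Topology
open scoped RealInnerProductSpace

set_option linter.unusedSectionVars false
set_option linter.unusedVariables false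
set_option maxHeartbeats 1000000

section Helpers

variable {F : Type*} [NormedAddCommGroup F] [InnerProductSpace ℝ F] [CompleteSpace F]

lemma grad_ineq {ψ : F → ℝ} (hc : ConvexOn ℝ Set.univ ψ) (hd : Differentiable ℝ ψ)
    (a b : F) : ψ a + ⟪gradient ψ a, b - a⟫ ≤ ψ b := by
  have hline : HasDerivAt (fun s : ℝ => a + s • (b - a)) (b - a) 0 := by
    simpa using ((hasDerivAt_id (0:ℝ)).smul_const (b - a)).const_add a
  have hψa : HasFDerivAt ψ (InnerProductSpace.toDual ℝ F (gradient ψ a)) (a + (0:ℝ) • (b - a)) := by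
    simpa using (hd a).hasGradientAt.hasFDerivAt
  have hF1 : HasDerivAt (fun s : ℝ => ψ (a + s • (b - a))) ⟪gradient ψ a, b - a⟫ 0 := by
    simpa [InnerProductSpace.toDual_apply_apply, Function.comp_def] using (hψa.comp_hasDerivAt (0:ℝ) hline)
  have hconv1 : ConvexOn ℝ Set.univ (fun s : ℝ => ψ (a + s • (b - a))) := by
    have := hc.comp_affineMap (AffineMap.lineMap a b)
    have heq : (fun s : ℝ => ψ (a + s • (b - a))) = ψ ∘ (AffineMap.lineMap a b) := by
      funext s
      simp [AffineMap.lineMap_apply, add_comm]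
    rw [heq]
    simpa using this
  have h01 : (⟪gradient ψ a, b - a⟫ : ℝ) ≤ slope (fun s : ℝ => ψ (a + s • (b - a))) 0 1 :=
    hconv1.le_slope_of_hasDerivAt (mem_univ _) (mem_univ _) one_pos hF1
  rw [slope_def_field] at h01
  simp only [zero_smul, add_zero, one_smul, sub_zero, div_one] at h01
  have : a + (b - a) = b := by abel
  rw [this] at h01
  linarith [h01]

variable (t : ℝ) (ψ : F → ℝ)

/-- The interpolant map `(1-t)•x + t ∇ψ x`. -/
noncomputable def Smap : F → F := fun x => (1 - t) • x + t • gradient ψ x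

/-- The strongly convex potential whose gradient is `Smap`. -/
noncomputable def phiP : F → ℝ := fun x => (1 - t) / 2 * ‖x‖ ^ 2 + t * ψ x

variable {t ψ}

lemma phiP_hasGradient (hd : Differentiable ℝ ψ) (x : F) :
    HasGradientAt (phiP t ψ) (Smap t ψ x) x := by
  have h1 : HasFDerivAt (fun x : F => ‖x‖ ^ 2) (2 • (innerSL ℝ x)) x :=
    (hasStrictFDerivAt_norm_sq x).hasFDerivAt
  have h2 : HasFDerivAt ψ (InnerProductSpace.toDual ℝ F (gradient ψ x)) x :=
    (hd x).hasGradientAt.hasFDerivAt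
  have h3 : HasFDerivAt (phiP t ψ)
      (((1 - t) / 2) • (2 • (innerSL ℝ x)) + t • (InnerProductSpace.toDual ℝ F (gradient ψ x))) x :=
    (h1.const_smul ((1 - t)/2)).add (h2.const_smul t) |>.congr_fderiv rfl
  rw [HasGradientAt]
  have : (InnerProductSpace.toDual ℝ F) (Smap t ψ x) =
      ((1 - t) / 2) • (2 • (innerSL ℝ x)) + t • (InnerProductSpace.toDual ℝ F (gradient ψ x)) := by
    ext y
    simp only [ContinuousLinearMap.add_apply, ContinuousLinearMap.smul_apply,
      InnerProductSpace.toDual_apply_apply, innerSL_apply_apply, Smap]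
    rw [inner_add_left, real_inner_smul_left, real_inner_smul_left]
    simp only [smul_eq_mul]
    ring
  exact hasGradientAt_iff_hasFDerivAt.mpr (this ▸ h3)

lemma phiP_strong (hc : ConvexOn ℝ Set.univ ψ) (hd : Differentiable ℝ ψ) (ht0 : 0 ≤ t) (ht1 : t < 1)
    (a b : F) :
    phiP t ψ a + ⟪Smap t ψ a, b - a⟫ + (1 - t) / 2 * ‖b - a‖ ^ 2 ≤ phiP t ψ b := by
  have hgi := grad_ineq hc hd a b
  have hq : ‖b - a‖ ^ 2 = ‖b‖ ^ 2 - 2 * ⟪b, a⟫ + ‖a‖ ^ 2 := norm_sub_sq_real b a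
  have hinner : ⟪Smap t ψ a, b - a⟫
      = (1 - t) * (⟪a, b⟫ - ‖a‖ ^ 2) + t * ⟪gradient ψ a, b - a⟫ := by
    rw [Smap, inner_add_left, real_inner_smul_left, real_inner_smul_left, inner_sub_right,
      real_inner_self_eq_norm_sq]
  have hab : ⟪b, a⟫ = ⟪a, b⟫ := real_inner_comm a b
  simp only [phiP]
  rw [hinner]
  nlinarith [mul_le_mul_of_nonneg_left hgi ht0, sq_nonneg ‖b - a‖]

lemma Smap_strong_mono (hc : ConvexOn ℝ Set.univ ψ) (hd : Differentiable ℝ ψ) (ht0 : 0 ≤ t)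
    (ht1 : t < 1) (a b : F) :
    (1 - t) * ‖a - b‖ ^ 2 ≤ ⟪Smap t ψ a - Smap t ψ b, a - b⟫ := by
  have h1 := phiP_strong hc hd ht0 ht1 a b
  have h2 := phiP_strong hc hd ht0 ht1 b a
  have e1 : ⟪Smap t ψ a - Smap t ψ b, a - b⟫
      = ⟪Smap t ψ a, a - b⟫ - ⟪Smap t ψ b, a - b⟫ := inner_sub_left _ _ _
  have e2 : ⟪Smap t ψ a, b - a⟫ = - ⟪Smap t ψ a, a - b⟫ := by
    rw [← inner_neg_right]; congr 1; abel
  have e3 : ‖b - a‖ = ‖a - b‖ := norm_sub_rev b a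
  rw [e3] at h1
  rw [e2] at h1
  linarith

lemma exists_phiP_min [FiniteDimensional ℝ F] (hc : ConvexOn ℝ Set.univ ψ)
    (hd : Differentiable ℝ ψ) (ht0 : 0 ≤ t) (ht1 : t < 1) (y : F) :
    ∃ x : F, ∀ z : F, phiP t ψ x - ⟪y, x⟫ ≤ phiP t ψ z - ⟪y, z⟫ := by
  set f : F → ℝ := fun z => phiP t ψ z - ⟪y, z⟫ with hf
  have hcont : Continuous f := by
    have hφ : Continuous (phiP t ψ) := by
      apply Continuous.add
      · exact (continuous_const.mul ((continuous_norm).pow 2))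
      · exact continuous_const.mul hd.continuous
    exact hφ.sub (continuous_const.inner continuous_id)
  have hlb : ∀ z : F, phiP t ψ 0 + ⟪Smap t ψ 0 - y, z⟫ + (1 - t)/2 * ‖z‖ ^ 2 ≤ f z := by
    intro z
    have := phiP_strong hc hd ht0 ht1 0 z
    simp only [sub_zero] at this
    have : phiP t ψ 0 + ⟪Smap t ψ 0, z⟫ + (1 - t)/2 * ‖z‖^2 ≤ phiP t ψ z := this
    have e : ⟪Smap t ψ 0 - y, z⟫ = ⟪Smap t ψ 0, z⟫ - ⟪y, z⟫ := inner_sub_left _ _ _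
    simp only [hf]; linarith
  set c : ℝ := (1 - t)/2 with hc'
  have hcpos : 0 < c := by simp only [hc']; linarith
  set K : ℝ := ‖Smap t ψ 0 - y‖ with hK
  set R : ℝ := K / c + 1 with hR
  have hRpos : 0 < R := by positivity
  obtain ⟨x₀, hx₀mem, hx₀⟩ := (isCompact_closedBall (0:F) R).exists_isMinOn
    ⟨0, by simp [le_of_lt hRpos]⟩ hcont.continuousOn
  refine ⟨x₀, fun z => ?_⟩
  show f x₀ ≤ f z
  rcases le_or_gt ‖z‖ R with hz | hz
  · exact hx₀ (by simpa [Metric.mem_closedBall, dist_eq_norm] using hz)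
  · have h0 : f x₀ ≤ f 0 := hx₀ (by simp [le_of_lt hRpos])
    have hf0 : f 0 = phiP t ψ 0 := by simp [hf]
    have hflb := hlb z
    have hKz : ⟪Smap t ψ 0 - y, z⟫ ≥ -(K * ‖z‖) := by
      have h1 := abs_real_inner_le_norm (Smap t ψ 0 - y) z
      have h2 := neg_abs_le (⟪Smap t ψ 0 - y, z⟫)
      linarith
    have hzR : c * ‖z‖ ^ 2 - K * ‖z‖ ≥ 0 := by
      have h1 : c * ‖z‖ ≥ c * R := by nlinarith
      have h2 : c * R = K + c := by rw [hR, mul_add, mul_one, mul_div_assoc', mul_div_right_comm, div_self hcpos.ne', one_mul]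
      nlinarith [norm_nonneg z]
    have : phiP t ψ 0 ≤ f z := by nlinarith
    linarith

section G
variable {g : F → F}
variable (hc : ConvexOn ℝ Set.univ ψ) (hd : Differentiable ℝ ψ) (ht0 : 0 ≤ t) (ht1 : t < 1)
variable (hg : ∀ y z : F, phiP t ψ (g y) - ⟪y, g y⟫ ≤ phiP t ψ z - ⟪y, z⟫)

include hc hd ht0 ht1 hg

lemma Smap_g (y : F) : Smap t ψ (g y) = y := by
  have hmin : IsMinOn (fun z => phiP t ψ z - ⟪y, z⟫) Set.univ (g y) := by
    intro z _; exact hg y z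
  have hloc : IsLocalMin (fun z => phiP t ψ z - ⟪y, z⟫) (g y) :=
    hmin.isLocalMin Filter.univ_mem
  have hder : HasFDerivAt (fun z => phiP t ψ z - ⟪y, z⟫)
      (InnerProductSpace.toDual ℝ F (Smap t ψ (g y)) - innerSL ℝ y) (g y) :=
    ((phiP_hasGradient hd (g y)).hasFDerivAt).sub ((innerSL ℝ y).hasFDerivAt)
  have h0 := hloc.hasFDerivAt_eq_zero hder
  have h1 : ⟪Smap t ψ (g y) - y, Smap t ψ (g y) - y⟫ = 0 := by
    have := congrArg (fun (L : F →L[ℝ] ℝ) => L (Smap t ψ (g y) - y)) h0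
    simp only [ContinuousLinearMap.sub_apply, InnerProductSpace.toDual_apply_apply,
      innerSL_apply_apply, ContinuousLinearMap.zero_apply] at this
    rw [← inner_sub_left] at this
    exact this
  have := inner_self_eq_zero.mp h1
  have := sub_eq_zero.mp this
  exact this

lemma g_Smap (x : F) : g (Smap t ψ x) = x := by
  have h1 := Smap_strong_mono hc hd ht0 ht1 (g (Smap t ψ x)) x
  rw [Smap_g hc hd ht0 ht1 hg (Smap t ψ x)] at h1
  simp only [sub_self, inner_zero_left] at h1
  have h2 : ‖g (Smap t ψ x) - x‖ ^ 2 ≤ 0 := by nlinarith [sq_nonneg ‖g (Smap t ψ x) - x‖]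
  have h3 : ‖g (Smap t ψ x) - x‖ = 0 := by nlinarith [sq_nonneg ‖g (Smap t ψ x) - x‖, norm_nonneg (g (Smap t ψ x) - x)]
  exact sub_eq_zero.mp (norm_eq_zero.mp h3)

lemma g_strong (y y' : F) : (1 - t) * ‖g y - g y'‖ ^ 2 ≤ ⟪y - y', g y - g y'⟫ := by
  have h := Smap_strong_mono hc hd ht0 ht1 (g y) (g y')
  rw [Smap_g hc hd ht0 ht1 hg y, Smap_g hc hd ht0 ht1 hg y'] at h
  exact h

lemma g_norm_le (y y' : F) : (1 - t) * ‖g y - g y'‖ ≤ ‖y - y'‖ := by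
  have h := g_strong hc hd ht0 ht1 hg y y'
  have hcs : ⟪y - y', g y - g y'⟫ ≤ ‖y - y'‖ * ‖g y - g y'‖ := real_inner_le_norm _ _
  rcases eq_or_lt_of_le (norm_nonneg (g y - g y')) with h0 | h0
  · rw [← h0]; simp [norm_nonneg]
  · have := (mul_le_mul_iff_left₀ h0).mp (by nlinarith : ((1-t) * ‖g y - g y'‖) * ‖g y - g y'‖ ≤ ‖y - y'‖ * ‖g y - g y'‖)
    exact this

lemma g_lipschitz : LipschitzWith ((1-t)⁻¹.toNNReal) g := by
  apply LipschitzWith.of_dist_le_mul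
  intro y y'
  rw [dist_eq_norm, dist_eq_norm]
  have h := g_norm_le hc hd ht0 ht1 hg y y'
  have h1t : (0:ℝ) < 1 - t := by linarith
  rw [Real.coe_toNNReal _ (le_of_lt (inv_pos.mpr h1t))]
  rw [inv_mul_eq_div, le_div_iff₀ h1t]
  linarith

lemma g_mono (y y' : F) : 0 ≤ ⟪y - y', g y - g y'⟫ := by
  have h := g_strong hc hd ht0 ht1 hg y y'
  nlinarith [sq_nonneg ‖g y - g y'‖]

lemma conj_hasFDerivAt (y : F) :
    HasFDerivAt (fun z => ⟪z, g z⟫ - phiP t ψ (g z)) (innerSL ℝ (g y)) y := by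
  set φs : F → ℝ := fun z => ⟪z, g z⟫ - phiP t ψ (g z) with hφs
  have h1t : (0:ℝ) < 1 - t := by linarith
  have hlow : ∀ z : F, ⟪z - y, g y⟫ ≤ φs z - φs y := by
    intro z
    have h := hg z (g y)
    have e : ⟪z - y, g y⟫ = ⟪z, g y⟫ - ⟪y, g y⟫ := inner_sub_left _ _ _
    simp only [hφs]
    linarith
  have hup : ∀ z : F, φs z - φs y - ⟪z - y, g y⟫ ≤ (1 - t)⁻¹ * ‖z - y‖ ^ 2 := by
    intro z
    have hstr := phiP_strong hc hd ht0 ht1 (g y) (g z)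
    rw [Smap_g hc hd ht0 ht1 hg y] at hstr
    have hcs : ⟪z - y, g z - g y⟫ ≤ ‖z - y‖ * ‖g z - g y‖ := real_inner_le_norm _ _
    have hnl := g_norm_le hc hd ht0 ht1 hg z y
    have e1 : ⟪z, g z⟫ - ⟪z, g y⟫ = ⟪z, g z - g y⟫ := by rw [inner_sub_right]
    have e2 : ⟪y, g z - g y⟫ = ⟪y, g z⟫ - ⟪y, g y⟫ := inner_sub_right _ _ _
    have e3 : ⟪z - y, g z - g y⟫ = ⟪z, g z - g y⟫ - ⟪y, g z - g y⟫ := inner_sub_left _ _ _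
    have e4 : ⟪z - y, g y⟫ = ⟪z, g y⟫ - ⟪y, g y⟫ := inner_sub_left _ _ _
    have hprod : ‖z - y‖ * ‖g z - g y‖ ≤ (1 - t)⁻¹ * ‖z - y‖ ^ 2 := by
      rw [inv_mul_eq_div, le_div_iff₀ h1t]
      nlinarith [mul_le_mul_of_nonneg_left hnl (norm_nonneg (z - y))]
    have hc2 : 0 ≤ (1 - t)/2 * ‖g z - g y‖ ^ 2 := by positivity
    simp only [hφs]
    linarith
  rw [hasFDerivAt_iff_isLittleO, Asymptotics.isLittleO_iff]
  intro c hcpos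
  have hK : (0:ℝ) < (1 - t)⁻¹ := inv_pos.mpr h1t
  filter_upwards [Metric.ball_mem_nhds y (show (0:ℝ) < c / (1-t)⁻¹ from div_pos hcpos hK)]
    with z hz
  rw [Metric.mem_ball, dist_eq_norm] at hz
  have hlo := hlow z
  have hupz := hup z
  have hinner : (innerSL ℝ (g y)) (z - y) = ⟪z - y, g y⟫ := by
    simp [innerSL_apply_apply, real_inner_comm]
  rw [hinner, Real.norm_eq_abs, abs_le]
  have herr2 : φs z - φs y - ⟪z - y, g y⟫ ≤ c * ‖z - y‖ := by
    calc φs z - φs y - ⟪z - y, g y⟫ ≤ (1-t)⁻¹ * ‖z - y‖ ^ 2 := hupz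
      _ = (1-t)⁻¹ * ‖z - y‖ * ‖z - y‖ := by ring
      _ ≤ c * ‖z - y‖ := by
          apply mul_le_mul_of_nonneg_right _ (norm_nonneg _)
          calc (1-t)⁻¹ * ‖z - y‖ ≤ (1-t)⁻¹ * (c / (1-t)⁻¹) :=
                mul_le_mul_of_nonneg_left (le_of_lt hz) (le_of_lt hK)
            _ = c := by field_simp
  have h0c : 0 ≤ c * ‖z - y‖ := mul_nonneg (le_of_lt hcpos) (norm_nonneg _)
  exact ⟨by linarith, by linarith⟩

end G


/-- derivative of a monotone map is positive semidefinite -/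
lemma psd_of_mono {g : F → F} (hm : ∀ y y' : F, 0 ≤ ⟪y - y', g y - g y'⟫) {y : F}
    {D : F →L[ℝ] F} (h : HasFDerivAt g D y) (v : F) : 0 ≤ ⟪v, D v⟫ := by
  have hline : HasDerivAt (fun s : ℝ => y + s • v) v 0 := by
    simpa using ((hasDerivAt_id (0:ℝ)).smul_const v).const_add y
  have hcomp : HasDerivAt (fun s : ℝ => g (y + s • v)) (D v) 0 := by
    have h' : HasFDerivAt g D (y + (0:ℝ) • v) := by simpa using h
    simpa [Function.comp_def] using (h'.comp_hasDerivAt (0:ℝ) hline)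
  have hq : HasDerivAt (fun s : ℝ => ⟪v, g (y + s • v)⟫) ⟪v, D v⟫ 0 := by
    simpa [Function.comp_def] using ((innerSL ℝ v).hasFDerivAt.comp_hasDerivAt (0:ℝ) hcomp)
  have htend : Tendsto (slope (fun s : ℝ => ⟪v, g (y + s • v)⟫) 0) (𝓝[>] 0) (𝓝 ⟪v, D v⟫) :=
    (hasDerivAt_iff_tendsto_slope.mp hq).mono_left
      (nhdsWithin_mono 0 (fun s hs => ne_of_gt hs))
  refine ge_of_tendsto htend ?_
  filter_upwards [self_mem_nhdsWithin] with s hs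
  rw [Set.mem_Ioi] at hs
  rw [slope_def_field]
  have hnum : 0 ≤ ⟪v, g (y + s • v) - g y⟫ := by
    have := hm (y + s • v) y
    simp only [add_sub_cancel_left] at this
    rw [real_inner_smul_left] at this
    nlinarith
  have : ⟪v, g (y + s • v)⟫ - ⟪v, g (y + (0:ℝ) • v)⟫ = ⟪v, g (y + s • v) - g y⟫ := by
    rw [← inner_sub_right]; norm_num
  rw [this]
  exact div_nonneg hnum (by linarith)


end Helpers

/-- determinant of a symmetric operator with eigenbasis scaling -/
lemma det_eq_prod_of_eigen {d : ℕ} (L : EuclideanSpace ℝ (Fin d) →L[ℝ] EuclideanSpace ℝ (Fin d))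
    (b : OrthonormalBasis (Fin d) ℝ (EuclideanSpace ℝ (Fin d))) (c : Fin d → ℝ)
    (h : ∀ i, L (b i) = c i • b i) :
    L.det = ∏ i, c i := by
  have : LinearMap.toMatrix b.toBasis b.toBasis (L : EuclideanSpace ℝ (Fin d) →ₗ[ℝ] EuclideanSpace ℝ (Fin d)) = Matrix.diagonal c := by
    ext i j
    rw [LinearMap.toMatrix_apply, Matrix.diagonal]
    simp only [OrthonormalBasis.coe_toBasis, ContinuousLinearMap.coe_coe, h j,
      _root_.map_smul, Module.Basis.repr_self, Finsupp.smul_single, Finsupp.single_apply,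
      smul_eq_mul, mul_one, Matrix.of_apply]
    by_cases hij : j = i
    · subst hij; simp
    · simp [hij, Ne.symm hij]
  have hdet : L.det = LinearMap.det (L : EuclideanSpace ℝ (Fin d) →ₗ[ℝ] EuclideanSpace ℝ (Fin d)) := rfl
  rw [hdet, ← LinearMap.det_toMatrix b.toBasis, this, Matrix.det_diagonal]

lemma det_pair {d : ℕ} {t : ℝ} (ht0 : 0 < t) (ht1 : t < 1)
    (D : EuclideanSpace ℝ (Fin d) →L[ℝ] EuclideanSpace ℝ (Fin d))
    (hsym : ∀ v w, ⟪D v, w⟫ = ⟪D w, v⟫)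
    (h0 : ∀ v, 0 ≤ ⟪v, D v⟫)
    (h1 : ∀ v, 0 ≤ ⟪v, (t⁻¹ • (ContinuousLinearMap.id ℝ (EuclideanSpace ℝ (Fin d)) - (1-t) • D)) v⟫) :
    (0 ≤ D.det ∧ 0 ≤ (t⁻¹ • (ContinuousLinearMap.id ℝ (EuclideanSpace ℝ (Fin d)) - (1-t) • D)).det)
    ∧ (D.det ≤ 1 ∨ (t⁻¹ • (ContinuousLinearMap.id ℝ (EuclideanSpace ℝ (Fin d)) - (1-t) • D)).det ≤ 1) := by
  set D₁ := t⁻¹ • (ContinuousLinearMap.id ℝ (EuclideanSpace ℝ (Fin d)) - (1-t) • D) with hD₁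
  have hsyml : (D : EuclideanSpace ℝ (Fin d) →ₗ[ℝ] EuclideanSpace ℝ (Fin d)).IsSymmetric := by
    intro v w
    simp only [ContinuousLinearMap.coe_coe]
    rw [hsym v w, real_inner_comm]
  have hn : Module.finrank ℝ (EuclideanSpace ℝ (Fin d)) = d := finrank_euclideanSpace_fin
  set b := hsyml.eigenvectorBasis hn with hb
  set μ : Fin d → ℝ := hsyml.eigenvalues hn with hμ
  have hbi : ∀ i, D (b i) = μ i • b i := fun i => hsyml.apply_eigenvectorBasis hn i
  set ν : Fin d → ℝ := fun i => t⁻¹ * (1 - (1-t) * μ i) with hν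
  have hb1i : ∀ i, D₁ (b i) = ν i • b i := by
    intro i
    simp only [hD₁, ContinuousLinearMap.smul_apply, ContinuousLinearMap.sub_apply,
      ContinuousLinearMap.id_apply, ContinuousLinearMap.smul_apply, hbi i, hν]
    rw [smul_smul, show ((1-t) * μ i) • b i = ((1-t) * μ i) • b i from rfl]
    have e : b i - ((1 - t) * μ i) • b i = (1 - (1 - t) * μ i) • b i := by
      rw [sub_smul, one_smul]
    rw [e, smul_smul]
  have hbnorm : ∀ i, ⟪b i, b i⟫ = 1 := fun i => real_inner_self_eq_norm_sq (b i) ▸ by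
    rw [b.orthonormal.1 i]; norm_num
  have hμpos : ∀ i, 0 ≤ μ i := by
    intro i
    have := h0 (b i)
    rw [hbi i, real_inner_smul_right, hbnorm i, mul_one] at this
    exact this
  have hνpos : ∀ i, 0 ≤ ν i := by
    intro i
    have := h1 (b i)
    rw [hb1i i, real_inner_smul_right, hbnorm i, mul_one] at this
    exact this
  have hdetD : D.det = ∏ i, μ i := det_eq_prod_of_eigen D b μ hbi
  have hdetD₁ : D₁.det = ∏ i, ν i := det_eq_prod_of_eigen D₁ b ν hb1i
  constructor
  · exact ⟨hdetD ▸ Finset.prod_nonneg (fun i _ => hμpos i),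
      hdetD₁ ▸ Finset.prod_nonneg (fun i _ => hνpos i)⟩
  by_contra hcon
  push_neg at hcon
  obtain ⟨hμ1, hν1⟩ := hcon
  rw [hdetD] at hμ1; rw [hdetD₁] at hν1
  have hAM : ∀ i, μ i ^ (1-t) * ν i ^ t ≤ 1 := by
    intro i
    have := Real.geom_mean_le_arith_mean2_weighted (by linarith : (0:ℝ) ≤ 1 - t)
      (le_of_lt ht0) (hμpos i) (hνpos i) (by ring)
    calc μ i ^ (1-t) * ν i ^ t ≤ (1-t) * μ i + t * ν i := this
      _ = 1 := by rw [hν]; field_simp; ring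
  have hprodle : (∏ i, μ i) ^ (1-t) * (∏ i, ν i) ^ t ≤ 1 := by
    rw [← Real.finset_prod_rpow _ _ (fun i _ => hμpos i), ← Real.finset_prod_rpow _ _ (fun i _ => hνpos i)]
    rw [← Finset.prod_mul_distrib]
    exact Finset.prod_le_one (fun i _ => mul_nonneg (Real.rpow_nonneg (hμpos i) _) (Real.rpow_nonneg (hνpos i) _)) (fun i _ => hAM i)
  have h1' : 1 < (∏ i, μ i) ^ (1-t) :=
    (Real.one_lt_rpow_iff_of_pos (lt_trans one_pos hμ1)).mpr (Or.inl ⟨hμ1, by linarith⟩)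
  have h2' : 1 < (∏ i, ν i) ^ t :=
    (Real.one_lt_rpow_iff_of_pos (lt_trans one_pos hν1)).mpr (Or.inl ⟨hν1, ht0⟩)
  nlinarith

/-- A Lipschitz map on Euclidean space maps null sets to null sets. -/
lemma lipschitz_image_null {d : ℕ} {K : NNReal}
    {f : EuclideanSpace ℝ (Fin d) → EuclideanSpace ℝ (Fin d)} (hf : LipschitzWith K f)
    {N : Set (EuclideanSpace ℝ (Fin d))} (hN : volume N = 0) : volume (f '' N) = 0 := by
  set e := (MeasurableEquiv.toLp 2 (Fin d → ℝ)).symm with he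
  have hK₁ := (EuclideanSpace.equiv (Fin d) ℝ).toContinuousLinearMap.lipschitz
  have hK₂ := (EuclideanSpace.equiv (Fin d) ℝ).symm.toContinuousLinearMap.lipschitz
  have hce : ⇑(EuclideanSpace.equiv (Fin d) ℝ).toContinuousLinearMap = ⇑e := rfl
  have hce' : ⇑(EuclideanSpace.equiv (Fin d) ℝ).symm.toContinuousLinearMap = ⇑e.symm := rfl
  rw [hce] at hK₁
  rw [hce'] at hK₂
  have htrans : ∀ (α β : Type) [MeasurableSpace α] [MeasurableSpace β]
      (ee : α ≃ᵐ β) (μα : Measure α) (μβ : Measure β), MeasurePreserving (⇑ee.symm) μβ μα →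
      ∀ M : Set α, μα M = 0 → μβ (⇑ee '' M) = 0 := by
    intro α β _ _ ee μα μβ hpres M hM
    rw [MeasurableEquiv.image_eq_preimage_symm]
    refine le_antisymm ?_ (zero_le)
    calc μβ (⇑ee.symm ⁻¹' M) ≤ μβ (⇑ee.symm ⁻¹' (toMeasurable μα M)) :=
        measure_mono (preimage_mono (subset_toMeasurable _ _))
      _ = μα (toMeasurable μα M) := hpres.measure_preimage
            (measurableSet_toMeasurable _ _).nullMeasurableSet
      _ = μα M := measure_toMeasurable _
      _ = 0 := hM
  set fp : (Fin d → ℝ) → (Fin d → ℝ) := ⇑e ∘ f ∘ ⇑e.symm with hfp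
  have hfpl : LipschitzWith (_ * (K * _)) fp := hK₁.comp (hf.comp hK₂)
  have hNp : volume (⇑e '' N) = 0 := by
    refine htrans _ _ e volume volume ?_ N hN
    exact (EuclideanSpace.volume_preserving_symm_measurableEquiv_toLp (Fin d)).symm
  have hfpN : volume (fp '' (⇑e '' N)) = 0 := by
    have hHvol : (MeasureTheory.Measure.hausdorffMeasure (Fintype.card (Fin d))
        : Measure (Fin d → ℝ)) = volume := MeasureTheory.hausdorffMeasure_pi_real
    rw [← hHvol] at hNp ⊢
    refine le_antisymm ?_ (zero_le)
    calc μH[Fintype.card (Fin d)] (fp '' (⇑e '' N))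
        ≤ (_ * (K * _) : NNReal) ^ (Fintype.card (Fin d) : ℝ) * μH[Fintype.card (Fin d)] (⇑e '' N) :=
          hfpl.hausdorffMeasure_image_le (by positivity) _
      _ = 0 := by rw [hNp, mul_zero]
  have himg : f '' N = ⇑e.symm '' (fp '' (⇑e '' N)) := by
    rw [image_image, image_image]
    apply image_congr
    intro x _
    simp only [hfp, Function.comp_apply, MeasurableEquiv.symm_apply_apply]
  rw [himg]
  refine htrans _ _ e.symm volume volume ?_ _ hfpN
  have : e.symm.symm = e := rfl
  rw [show (⇑e.symm.symm : EuclideanSpace ℝ (Fin d) → (Fin d → ℝ)) = ⇑e from rfl]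
  exact EuclideanSpace.volume_preserving_symm_measurableEquiv_toLp (Fin d)

theorem main_aux {d : ℕ} {t : ℝ} (ht0 : 0 < t) (ht1 : t < 1)
    (ψ : EuclideanSpace ℝ (Fin d) → ℝ)
    (hc : ConvexOn ℝ Set.univ ψ) (hd : Differentiable ℝ ψ)
    (μ₀ μ₁ : Measure (EuclideanSpace ℝ (Fin d))) (h0 : μ₀ ≤ volume) (h1 : μ₁ ≤ volume)
    (hpush : Measure.map (fun x => gradient ψ x) μ₀ = μ₁) :
    Measure.map (Smap t ψ) μ₀ ≤ volume := by
  classical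
  let E := EuclideanSpace ℝ (Fin d)
  show Measure.map (Smap t ψ) μ₀ ≤ volume
  -- measurability of the gradient and the interpolation map
  have hgradmeas : Measurable (fun x : E => gradient ψ x) := by
    have : (fun x : E => gradient ψ x)
        = fun x => (InnerProductSpace.toDual ℝ E).symm (fderiv ℝ ψ x) := rfl
    rw [this]
    exact (InnerProductSpace.toDual ℝ E).symm.continuous.measurable.comp (measurable_fderiv ℝ ψ)
  have hSm : Measurable (Smap t ψ) := by
    have : Smap t ψ = fun x : E => (1-t) • x + t • gradient ψ x := rfl
    rw [this]
    exact (measurable_id.const_smul (1-t)).add (hgradmeas.const_smul t)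
  -- the inverse map `g`
  choose g hg using fun y : E => exists_phiP_min hc hd ht0.le ht1 y
  have hg' : ∀ y z : E, phiP t ψ (g y) - ⟪y, g y⟫ ≤ phiP t ψ z - ⟪y, z⟫ := hg
  have hgS : ∀ x : E, g (Smap t ψ x) = x := g_Smap hc hd ht0.le ht1 hg'
  have hglip : LipschitzWith ((1-t)⁻¹.toNNReal) g := g_lipschitz hc hd ht0.le ht1 hg'
  have hgmono : ∀ y y' : E, 0 ≤ ⟪y - y', g y - g y'⟫ := g_mono hc hd ht0.le ht1 hg'
  have hgnorm : ∀ y y' : E, (1-t) * ‖g y - g y'‖ ≤ ‖y - y'‖ := g_norm_le hc hd ht0.le ht1 hg'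
  -- the second transported map g₁
  set g₁ : E → E := fun y => t⁻¹ • (y - (1-t) • g y) with hg₁def
  have hg₁S : ∀ x : E, g₁ (Smap t ψ x) = gradient ψ x := by
    intro x
    have h1 : Smap t ψ x - (1-t) • x = t • gradient ψ x := by
      show (1-t) • x + t • gradient ψ x - (1-t) • x = t • gradient ψ x
      abel
    simp only [hg₁def, hgS x, h1, smul_smul, inv_mul_cancel₀ (ne_of_gt ht0), one_smul]
  have hg₁mono : ∀ y y' : E, 0 ≤ ⟪y - y', g₁ y - g₁ y'⟫ := by
    intro y y'
    have hdiffeq : g₁ y - g₁ y' = t⁻¹ • ((y - y') - (1-t) • (g y - g y')) := by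
      simp only [hg₁def, smul_sub, smul_smul]
      module
    rw [hdiffeq, real_inner_smul_right, inner_sub_right, real_inner_smul_right]
    have hcs : ⟪y - y', g y - g y'⟫ ≤ ‖y - y'‖ * ‖g y - g y'‖ := real_inner_le_norm _ _
    have h2 : (1-t) * ⟪y - y', g y - g y'⟫ ≤ ‖y - y'‖ ^ 2 := by
      rcases le_or_gt ⟪y - y', g y - g y'⟫ 0 with hneg | hpos
      · nlinarith [sq_nonneg ‖y - y'‖]
      · have := hgnorm y y'
        nlinarith [norm_nonneg (y - y'), norm_nonneg (g y - g y')]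
    have hself : ⟪y - y', y - y'⟫ = ‖y - y'‖ ^ 2 := real_inner_self_eq_norm_sq _
    have : 0 ≤ ⟪y - y', y - y'⟫ - (1-t) * ⟪y - y', g y - g y'⟫ := by rw [hself]; linarith
    positivity
  -- a.e. differentiability and measurable pieces
  have hae : ∀ᵐ y : E, DifferentiableAt ℝ g y := hglip.ae_differentiableAt
  have hNnull : volume {y : E | ¬ DifferentiableAt ℝ g y} = 0 := by
    rw [← MeasureTheory.ae_iff]; exact hae
  have hDmeas : MeasurableSet {y : E | DifferentiableAt ℝ g y} :=
    measurableSet_of_differentiableAt ℝ g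
  set detf : E → ℝ := fun y => (fderiv ℝ g y).det with hdetf
  have hdetmeas : Measurable detf :=
    ContinuousLinearMap.continuous_det.measurable.comp (measurable_fderiv ℝ g)
  set D₁f : E → (E →L[ℝ] E) :=
    fun y => t⁻¹ • (ContinuousLinearMap.id ℝ E - (1-t) • fderiv ℝ g y) with hD₁f
  -- pointwise derivative facts
  have hD₁der : ∀ y : E, DifferentiableAt ℝ g y → HasFDerivAt g₁ (D₁f y) y := by
    intro y hy
    exact ((hasFDerivAt_id y).sub (hy.hasFDerivAt.const_smul (1-t))).const_smul t⁻¹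
  have hsymD : ∀ y : E, DifferentiableAt ℝ g y →
      ∀ v w, ⟪(fderiv ℝ g y) v, w⟫ = ⟪(fderiv ℝ g y) w, v⟫ := by
    intro y hy v w
    have hf' : ∀ z : E, HasFDerivAt (fun z => ⟪z, g z⟫ - phiP t ψ (g z)) (innerSL ℝ (g z)) z :=
      conj_hasFDerivAt hc hd ht0.le ht1 hg'
    have hx : HasFDerivAt (fun z : E => innerSL ℝ (g z))
        ((innerSL ℝ (E := E)).comp (fderiv ℝ g y)) y := by
      exact (ContinuousLinearMap.hasFDerivAt _).comp y hy.hasFDerivAt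
    have := second_derivative_symmetric hf' hx v w
    simpa using this
  have hdets : ∀ y : E, DifferentiableAt ℝ g y →
      (0 ≤ detf y ∧ 0 ≤ (D₁f y).det) ∧ (detf y ≤ 1 ∨ (D₁f y).det ≤ 1) := by
    intro y hy
    exact det_pair ht0 ht1 (fderiv ℝ g y) (hsymD y hy)
      (fun v => psd_of_mono hgmono hy.hasFDerivAt v)
      (fun v => psd_of_mono hg₁mono (hD₁der y hy) v)
  -- the measure estimate
  rw [Measure.le_iff]
  intro B hB
  rw [Measure.map_apply hSm hB]
  set Ds := {y : E | DifferentiableAt ℝ g y} with hDs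
  set B₀ := (B ∩ Ds) ∩ {y : E | detf y ≤ 1} with hB₀def
  set B₁ := (B ∩ Ds) \ {y : E | detf y ≤ 1} with hB₁def
  set Bn := B \ Ds with hBndef
  have hB₀ : MeasurableSet B₀ := (hB.inter hDmeas).inter (measurableSet_le hdetmeas measurable_const)
  have hB₁ : MeasurableSet B₁ := (hB.inter hDmeas).diff (measurableSet_le hdetmeas measurable_const)
  have hcover : Smap t ψ ⁻¹' B ⊆
      (Smap t ψ ⁻¹' B₀) ∪ (Smap t ψ ⁻¹' B₁) ∪ (Smap t ψ ⁻¹' Bn) := by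
    intro x hx
    by_cases hds : Smap t ψ x ∈ Ds
    · by_cases hdet : detf (Smap t ψ x) ≤ 1
      · exact Or.inl (Or.inl ⟨⟨hx, hds⟩, hdet⟩)
      · exact Or.inl (Or.inr ⟨⟨hx, hds⟩, hdet⟩)
    · exact Or.inr ⟨hx, hds⟩
  have hmono0 : μ₀ (Smap t ψ ⁻¹' B) ≤
      μ₀ (Smap t ψ ⁻¹' B₀) + μ₀ (Smap t ψ ⁻¹' B₁) + μ₀ (Smap t ψ ⁻¹' Bn) := by
    calc μ₀ (Smap t ψ ⁻¹' B) ≤ μ₀ ((Smap t ψ ⁻¹' B₀) ∪ (Smap t ψ ⁻¹' B₁) ∪ (Smap t ψ ⁻¹' Bn)) :=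
        measure_mono hcover
      _ ≤ μ₀ ((Smap t ψ ⁻¹' B₀) ∪ (Smap t ψ ⁻¹' B₁)) + μ₀ (Smap t ψ ⁻¹' Bn) := measure_union_le _ _
      _ ≤ μ₀ (Smap t ψ ⁻¹' B₀) + μ₀ (Smap t ψ ⁻¹' B₁) + μ₀ (Smap t ψ ⁻¹' Bn) := by
        gcongr
        exact measure_union_le _ _
  -- part B₀
  have hpart0 : μ₀ (Smap t ψ ⁻¹' B₀) ≤ volume B₀ := by
    have hsubset : Smap t ψ ⁻¹' B₀ ⊆ g '' B₀ := fun x hx => ⟨Smap t ψ x, hx, hgS x⟩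
    calc μ₀ (Smap t ψ ⁻¹' B₀) ≤ volume (Smap t ψ ⁻¹' B₀) := Measure.le_iff'.mp h0 _
      _ ≤ volume (g '' B₀) := measure_mono hsubset
      _ ≤ ∫⁻ y in B₀, ENNReal.ofReal |(fderiv ℝ g y).det| := by
        apply addHaar_image_le_lintegral_abs_det_fderiv volume hB₀
        intro y hy
        exact (hy.1.2 : DifferentiableAt ℝ g y).hasFDerivAt.hasFDerivWithinAt
      _ ≤ ∫⁻ _ in B₀, 1 := by
        apply setLIntegral_mono' hB₀
        intro y hy
        have h1 := (hdets y hy.1.2).1.1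
        have h2 : detf y ≤ 1 := hy.2
        rw [abs_of_nonneg h1]
        exact ENNReal.ofReal_le_one.mpr h2
      _ = volume B₀ := setLIntegral_one _
  -- part B₁
  have hpart1 : μ₀ (Smap t ψ ⁻¹' B₁) ≤ volume B₁ := by
    set U := toMeasurable volume (g₁ '' B₁) with hU
    have hsubset : Smap t ψ ⁻¹' B₁ ⊆ (fun x => gradient ψ x) ⁻¹' U := by
      intro x hx
      have : gradient ψ x ∈ g₁ '' B₁ := ⟨Smap t ψ x, hx, hg₁S x⟩
      exact subset_toMeasurable _ _ this
    calc μ₀ (Smap t ψ ⁻¹' B₁) ≤ μ₀ ((fun x => gradient ψ x) ⁻¹' U) := measure_mono hsubset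
      _ = μ₁ U := by rw [← hpush, Measure.map_apply hgradmeas (measurableSet_toMeasurable _ _)]
      _ ≤ volume U := Measure.le_iff'.mp h1 _
      _ = volume (g₁ '' B₁) := measure_toMeasurable _
      _ ≤ ∫⁻ y in B₁, ENNReal.ofReal |(D₁f y).det| := by
        apply addHaar_image_le_lintegral_abs_det_fderiv volume hB₁
        intro y hy
        exact (hD₁der y hy.1.2).hasFDerivWithinAt
      _ ≤ ∫⁻ _ in B₁, 1 := by
        apply setLIntegral_mono' hB₁
        intro y hy
        have hfacts := hdets y hy.1.2
        have h2 : (D₁f y).det ≤ 1 := by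
          rcases hfacts.2 with hcase | hcase
          · exact absurd hcase hy.2
          · exact hcase
        rw [abs_of_nonneg hfacts.1.2]
        exact ENNReal.ofReal_le_one.mpr h2
      _ = volume B₁ := setLIntegral_one _
  -- part Bn
  have hpartn : μ₀ (Smap t ψ ⁻¹' Bn) = 0 := by
    have hsubset : Smap t ψ ⁻¹' Bn ⊆ g '' {y : E | ¬ DifferentiableAt ℝ g y} := by
      intro x hx
      exact ⟨Smap t ψ x, hx.2, hgS x⟩
    have himgnull : volume (g '' {y : E | ¬ DifferentiableAt ℝ g y}) = 0 :=
      lipschitz_image_null hglip hNnull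
    refine le_antisymm ?_ (zero_le)
    calc μ₀ (Smap t ψ ⁻¹' Bn) ≤ volume (Smap t ψ ⁻¹' Bn) := Measure.le_iff'.mp h0 _
      _ ≤ volume (g '' {y : E | ¬ DifferentiableAt ℝ g y}) := measure_mono hsubset
      _ = 0 := himgnull
  -- combine
  have hdisj : Disjoint B₀ B₁ := by
    apply Set.disjoint_left.mpr
    intro y hy0 hy1
    exact hy1.2 hy0.2
  have hunion : volume B₀ + volume B₁ = volume (B₀ ∪ B₁) := (measure_union hdisj hB₁).symm
  have hsubB : B₀ ∪ B₁ ⊆ B := by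
    intro y hy
    rcases hy with hy | hy
    · exact hy.1.1
    · exact hy.1.1
  calc μ₀ (Smap t ψ ⁻¹' B) ≤ μ₀ (Smap t ψ ⁻¹' B₀) + μ₀ (Smap t ψ ⁻¹' B₁) + μ₀ (Smap t ψ ⁻¹' Bn) :=
      hmono0
    _ ≤ volume B₀ + volume B₁ + 0 := add_le_add (add_le_add hpart0 hpart1) (le_of_eq hpartn)
    _ = volume (B₀ ∪ B₁) := by rw [add_zero, hunion]
    _ ≤ volume B := measure_mono hsubB

/-- densities bounded by 1 give measures below Lebesgue -/
lemma density_le_volume {d : ℕ} (Ω : Set (EuclideanSpace ℝ (Fin d)))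
    (ρ : EuclideanSpace ℝ (Fin d) → ℝ) (hle : ∀ᵐ x, ρ x ≤ 1) :
    (volume.restrict Ω).withDensity (fun x => ENNReal.ofReal (ρ x)) ≤ volume := by
  rw [Measure.le_iff]
  intro s hs
  rw [withDensity_apply _ hs]
  calc ∫⁻ x in s, ENNReal.ofReal (ρ x) ∂(volume.restrict Ω)
      ≤ ∫⁻ _ in s, 1 ∂(volume.restrict Ω) := by
        apply lintegral_mono_ae
        have h1 : ∀ᵐ x ∂(volume.restrict Ω), ρ x ≤ 1 := ae_restrict_of_ae hle
        have h2 : ∀ᵐ x ∂((volume.restrict Ω).restrict s), ρ x ≤ 1 := ae_restrict_of_ae h1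
        filter_upwards [h2] with x hx
        exact ENNReal.ofReal_le_one.mpr hx
    _ = (volume.restrict Ω) s := setLIntegral_one _
    _ = volume (s ∩ Ω) := Measure.restrict_apply hs
    _ ≤ volume s := measure_mono inter_subset_left

/-- Geodesic convexity of the constraint set `{ρ ≤ 1}`: if `ρ₀, ρ₁` are probability
densities on a bounded convex open set `Ω` with densities `≤ 1` and `T = ∇ψ` (gradient
of a convex function, i.e. the Brenier optimal map) pushes `ρ₀ dx` to `ρ₁ dx`, then
every displacement interpolation `((1-t)id + tT)_♯(ρ₀ dx)` is absolutely continuous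
with density `≤ 1`. -/
theorem geodesic_convexity_of_density_constraint {d : ℕ}
    (Ω : Set (EuclideanSpace ℝ (Fin d))) (hΩo : IsOpen Ω) (hΩc : Convex ℝ Ω)
    (hΩb : Bornology.IsBounded Ω)
    (ρ₀ ρ₁ : EuclideanSpace ℝ (Fin d) → ℝ)
    (h₀m : Measurable ρ₀) (h₁m : Measurable ρ₁)
    (h₀pos : ∀ x, 0 ≤ ρ₀ x) (h₁pos : ∀ x, 0 ≤ ρ₁ x)
    (h₀le : ∀ᵐ x, ρ₀ x ≤ 1) (h₁le : ∀ᵐ x, ρ₁ x ≤ 1)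
    (h₀mass : ∫ x in Ω, ρ₀ x = 1) (h₁mass : ∫ x in Ω, ρ₁ x = 1)
    (μ₀ μ₁ : Measure (EuclideanSpace ℝ (Fin d)))
    (hμ₀ : μ₀ = (volume.restrict Ω).withDensity (fun x => ENNReal.ofReal (ρ₀ x)))
    (hμ₁ : μ₁ = (volume.restrict Ω).withDensity (fun x => ENNReal.ofReal (ρ₁ x)))
    (ψ : EuclideanSpace ℝ (Fin d) → ℝ)
    (hψconv : ConvexOn ℝ Set.univ ψ) (hψdiff : Differentiable ℝ ψ)
    (T : EuclideanSpace ℝ (Fin d) → EuclideanSpace ℝ (Fin d))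
    (hT : ∀ x, T x = gradient ψ x)
    (hTpush : Measure.map T μ₀ = μ₁) :
    ∀ t ∈ Set.Icc (0 : ℝ) 1,
      Measure.map (fun x => (1 - t) • x + t • T x) μ₀ ≤ volume := by
  have hTg : T = fun x => gradient ψ x := funext hT
  subst hTg
  have h0 : μ₀ ≤ volume := hμ₀ ▸ density_le_volume Ω ρ₀ h₀le
  have h1 : μ₁ ≤ volume := hμ₁ ▸ density_le_volume Ω ρ₁ h₁le
  intro t ht
  rcases eq_or_lt_of_le ht.1 with ht0 | ht0
  · -- t = 0
    have : (fun x : EuclideanSpace ℝ (Fin d) => (1 - t) • x + t • gradient ψ x) = id := by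
      funext x
      simp [← ht0]
    rw [this, Measure.map_id]
    exact h0
  rcases eq_or_lt_of_le ht.2 with ht1 | ht1
  · -- t = 1
    have : (fun x : EuclideanSpace ℝ (Fin d) => (1 - t) • x + t • gradient ψ x)
        = fun x => gradient ψ x := by
      funext x
      simp [ht1]
    rw [this, hTpush]
    exact h1
  · exact main_aux ht0 ht1 ψ hψconv hψdiff μ₀ μ₁ h0 h1 hTpush
end
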